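/- Let n ≥ 2 and let f : [0,∞) → ℝ be continuous with f(0) = 0, twice continuously differentiable on (0,∞) with lim_{r→0⁺} f'(r) = 0, and satisfy f''(r) = (1 + f'(r)²)(1 - (n-1)f'(r)/r) for all r > 0. Then f'(r) < r/(n-1) for all r > 0, and consequently f(r) ≤ r²/(2(n-1)) for all r ≥ 0. -/

import Mathlib

open Real Filter Set

/-- Part (1) of Proposition 4.2: the bowl soliton profile `f`, solving
`f'' = (1 + f'²)(1 - (n-1) f' / r)` on `(0,∞)` with `f(0) = 0` and `f'(0⁺) = 0`,
satisfies `f'(r) < r/(n-1)` for all `r > 0` and `f(r) ≤ r²/(2(n-1))` for all `r ≥ 0`. -/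
theorem bowl_profile_gradient_upper_bound (n : ℕ) (hn : 2 ≤ n) (f : ℝ → ℝ)
    (hf0 : f 0 = 0)
    (hcont : ContinuousOn f (Set.Ici 0))
    (hC2 : ContDiffOn ℝ 2 f (Set.Ioi 0))
    (hd0 : Tendsto (deriv f) (nhdsWithin 0 (Set.Ioi 0)) (nhds 0))
    (hODE : ∀ r : ℝ, 0 < r → deriv (deriv f) r =
      (1 + (deriv f r) ^ 2) * (1 - ((n : ℝ) - 1) * deriv f r / r)) :
    (∀ r : ℝ, 0 < r → deriv f r < r / ((n : ℝ) - 1)) ∧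
    (∀ r : ℝ, 0 ≤ r → f r ≤ r ^ 2 / (2 * ((n : ℝ) - 1))) := by
  have hn2 : (2:ℝ) ≤ (n:ℝ) := by exact_mod_cast hn
  set c : ℝ := (n:ℝ) - 1 with hcdef
  have hc : (1:ℝ) ≤ c := by simp [hcdef]; linarith
  have hc0 : (0:ℝ) < c := lt_of_lt_of_le one_pos hc
  have hopen : IsOpen (Set.Ioi (0:ℝ)) := isOpen_Ioi
  -- differentiability facts
  have hf_diff : ∀ r : ℝ, 0 < r → HasDerivAt f (deriv f r) r := by
    intro r hr
    exact ((hC2.differentiableOn (by norm_num)).differentiableAt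
      (hopen.mem_nhds hr)).hasDerivAt
  have hC1 : ContDiffOn ℝ 1 (deriv f) (Set.Ioi 0) :=
    hC2.deriv_of_isOpen hopen (by norm_num)
  have hderiv_cont : ContinuousOn (deriv f) (Set.Ioi 0) := hC1.continuousOn
  have hderiv_diff : ∀ r : ℝ, 0 < r → HasDerivAt (deriv f) (deriv (deriv f) r) r := by
    intro r hr
    exact ((hC1.differentiableOn (by norm_num)).differentiableAt
      (hopen.mem_nhds hr)).hasDerivAt
  -- the comparison function g
  set g : ℝ → ℝ := fun r => if r ≤ 0 then 0 else deriv f r - r / c with hgdef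
  have hg_eq : ∀ r : ℝ, 0 < r → g r = deriv f r - r / c := by
    intro r hr; simp [hgdef, not_le.mpr hr]
  have hg0 : g 0 = 0 := by simp [hgdef]
  have hg_hasDeriv : ∀ r : ℝ, 0 < r → HasDerivAt g (deriv (deriv f) r - 1 / c) r := by
    intro r hr
    have h1 : HasDerivAt (fun t : ℝ => deriv f t - t / c)
        (deriv (deriv f) r - 1 / c) r := by
      have := (hderiv_diff r hr).sub ((hasDerivAt_id r).div_const c)
      exact this
    apply h1.congr_of_eventuallyEq
    filter_upwards [hopen.mem_nhds hr] with t ht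
    exact hg_eq t ht
  have hg_contAt : ∀ r : ℝ, 0 < r → ContinuousAt g r := by
    intro r hr
    exact (hg_hasDeriv r hr).continuousAt
  -- continuity of g on [0,∞)
  have hg_cont : ContinuousOn g (Set.Ici 0) := by
    intro x hx
    rcases eq_or_lt_of_le (Set.mem_Ici.mp hx) with h | h
    · -- x = 0
      subst h
      rw [ContinuousWithinAt, hg0]
      have hIci : Set.Ici (0:ℝ) = insert 0 (Set.Ioi 0) := by
        rw [Set.Ioi_insert]
      rw [hIci, nhdsWithin_insert, tendsto_sup]
      constructor
      · simpa [hg0] using (tendsto_pure_nhds g 0)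
      · have h2 : Tendsto (fun t : ℝ => deriv f t - t / c)
            (nhdsWithin 0 (Set.Ioi 0)) (nhds 0) := by
          have h3 : Tendsto (fun t : ℝ => t / c) (nhdsWithin 0 (Set.Ioi 0))
              (nhds 0) := by
            have := (continuous_id.div_const c).tendsto (0:ℝ)
            simpa using this.mono_left nhdsWithin_le_nhds
          simpa using hd0.sub h3
        apply h2.congr'
        filter_upwards [self_mem_nhdsWithin] with t ht
        exact (hg_eq t ht).symm
    · exact (hg_contAt x h).continuousWithinAt
  -- second derivative sign when g ≥ 0
  have hgderiv_le : ∀ r : ℝ, 0 < r → 0 ≤ g r → deriv (deriv f) r ≤ 0 := by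
    intro r hr hgr
    rw [hg_eq r hr] at hgr
    have hfd : r / c ≤ deriv f r := by linarith
    have h1 : (1:ℝ) ≤ c * deriv f r / r := by
      rw [le_div_iff₀ hr]
      have : r / c * c ≤ deriv f r * c := by
        exact mul_le_mul_of_nonneg_right hfd (le_of_lt hc0)
      rw [div_mul_cancel₀ _ (ne_of_gt hc0)] at this
      nlinarith
    rw [hODE r hr]
    apply mul_nonpos_of_nonneg_of_nonpos
    · positivity
    · linarith
  -- main claim: g < 0 on (0,∞)
  have key : ∀ r : ℝ, 0 < r → g r < 0 := by
    intro r0 hr0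
    by_contra hcon
    push_neg at hcon
    -- Step 1: g > 0 just to the left of r0
    have step1 : ∃ a : ℝ, 0 ≤ a ∧ a < r0 ∧ ∀ t ∈ Set.Ioo a r0, 0 < g t := by
      have hev : ∀ᶠ t in nhdsWithin r0 (Set.Iio r0), 0 < g t := by
        rcases eq_or_lt_of_le hcon with h0 | h0
        · -- g r0 = 0 : use the negative derivative
          have hd : HasDerivAt g (deriv (deriv f) r0 - 1 / c) r0 := hg_hasDeriv r0 hr0
          set d : ℝ := deriv (deriv f) r0 - 1 / c with hddef
          clear_value d
          have hdneg : d < 0 := by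
            have h1 := hgderiv_le r0 hr0 hcon
            have hcpos : (0:ℝ) < 1/c := by positivity
            rw [hddef]; linarith
          have hslope : Tendsto (slope g r0) (nhdsWithin r0 {r0}ᶜ) (nhds d) :=
            hasDerivAt_iff_tendsto_slope.mp hd
          have hslope' : Tendsto (slope g r0) (nhdsWithin r0 (Set.Iio r0)) (nhds d) :=
            hslope.mono_left (nhdsWithin_mono _ (fun t ht => ne_of_lt ht))
          have hev1 : ∀ᶠ t in nhdsWithin r0 (Set.Iio r0), slope g r0 t < d / 2 :=
            hslope' (Iio_mem_nhds (by linarith))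
          filter_upwards [hev1, self_mem_nhdsWithin] with t ht1 ht2
          have htlt : t < r0 := ht2
          have hne : t - r0 ≠ 0 := sub_ne_zero.mpr (ne_of_lt htlt)
          have hslope_eq : slope g r0 t = g t / (t - r0) := by
            rw [slope_def_field, ← h0, sub_zero]
          have h2 : g t / (t - r0) < d / 2 := by rw [← hslope_eq]; exact ht1
          have h3 : g t = (g t / (t - r0)) * (t - r0) := by
            field_simp
          rw [h3]
          exact mul_pos_of_neg_of_neg (lt_trans h2 (by linarith)) (by linarith)
        · -- g r0 > 0 : continuity
          have := (hg_contAt r0 hr0).eventually (lt_mem_nhds h0)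
          exact this.filter_mono nhdsWithin_le_nhds
      rw [eventually_iff] at hev
      rcases mem_nhdsLT_iff_exists_Ioo_subset.mp hev with ⟨a, ha, hsub⟩
      refine ⟨max a 0, le_max_right _ _, ?_, ?_⟩
      · exact max_lt ha hr0
      · intro t ht
        exact hsub ⟨lt_of_le_of_lt (le_max_left a 0) ht.1, ht.2⟩
    obtain ⟨a, ha0, har0, hapos⟩ := step1
    -- the set of bad points
    set B : Set ℝ := {t : ℝ | t ∈ Set.Icc 0 r0 ∧ g t < 0} with hBdef
    set S : Set ℝ := insert 0 B with hSdef
    have hSne : S.Nonempty := ⟨0, Set.mem_insert _ _⟩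
    have hSsub : S ⊆ Set.Icc 0 r0 := by
      intro t ht
      rcases ht with h | h
      · subst h; exact ⟨le_refl 0, le_of_lt hr0⟩
      · exact h.1
    have hSbdd : BddAbove S := ⟨r0, fun t ht => (hSsub ht).2⟩
    set m : ℝ := sSup S with hmdef
    have hm0 : 0 ≤ m := le_csSup hSbdd (Set.mem_insert _ _)
    -- every element of S is ≤ a
    have hSa : ∀ t ∈ S, t ≤ a := by
      intro t ht
      rcases ht with h | h
      · subst h; exact ha0
      · by_contra hta
        push_neg at hta
        have ht0 : t < r0 := by
          rcases eq_or_lt_of_le h.1.2 with he | he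
          · exfalso; rw [he] at h; linarith [h.2]
          · exact he
        exact absurd (hapos t ⟨hta, ht0⟩) (by linarith [h.2])
    have hma : m ≤ a := csSup_le hSne hSa
    have hmr0 : m < r0 := lt_of_le_of_lt hma har0
    -- g m ≤ 0
    have hgm : g m ≤ 0 := by
      by_contra hgmpos
      push_neg at hgmpos
      have hmne : m ≠ 0 := by intro h; rw [h, hg0] at hgmpos; linarith
      have hmpos : 0 < m := lt_of_le_of_ne hm0 (Ne.symm hmne)
      have hca : ContinuousAt g m := hg_contAt m hmpos
      have hev : ∀ᶠ t in nhds m, 0 < g t := hca.eventually (lt_mem_nhds hgmpos)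
      rcases Metric.eventually_nhds_iff.mp hev with ⟨ε, hε, hball⟩
      have hlt : max 0 (m - ε) < m := by
        apply max_lt hmpos; linarith
      rcases exists_lt_of_lt_csSup hSne hlt with ⟨s, hsS, hs⟩
      have hs0 : 0 < s := lt_of_le_of_lt (le_max_left 0 (m - ε)) hs
      have hsB : s ∈ B := by
        rcases hsS with h | h
        · exfalso; rw [h] at hs0; exact lt_irrefl 0 hs0
        · exact h
      have hsm : s ≤ m := le_csSup hSbdd hsS
      have hdist : dist s m < ε := by
        rw [Real.dist_eq, abs_lt]
        constructor
        · have : m - ε < s := lt_of_le_of_lt (le_max_right 0 (m - ε)) hs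
          linarith
        · linarith
      exact absurd (hball hdist) (by linarith [hsB.2])
    -- g ≥ 0 on (m, r0]
    have hgnn : ∀ t : ℝ, m < t → t ≤ r0 → 0 ≤ g t := by
      intro t hmt htr
      by_contra hneg
      push_neg at hneg
      have : t ∈ S := Or.inr ⟨⟨le_of_lt (lt_of_le_of_lt hm0 hmt), htr⟩, hneg⟩
      exact absurd (le_csSup hSbdd this) (by linarith)
    -- the auxiliary strictly decreasing function
    set φ : ℝ → ℝ := fun t => g t + t / (2 * c) with hφdef
    have hφcont : ContinuousOn φ (Set.Icc m r0) := by
      apply ContinuousOn.add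
      · exact hg_cont.mono (fun t ht => le_trans hm0 ht.1)
      · exact (continuous_id.div_const (2 * c)).continuousOn
    have hφderiv : ∀ t ∈ interior (Set.Icc m r0), deriv φ t < 0 := by
      intro t ht
      rw [interior_Icc] at ht
      have ht0 : 0 < t := lt_of_le_of_lt hm0 ht.1
      have hgt : 0 ≤ g t := hgnn t ht.1 (le_of_lt ht.2)
      have hdd : deriv (deriv f) t ≤ 0 := hgderiv_le t ht0 hgt
      have hφd : HasDerivAt φ (deriv (deriv f) t - 1 / c + 1 / (2 * c)) t := by
        have := (hg_hasDeriv t ht0).add ((hasDerivAt_id t).div_const (2 * c))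
        exact this
      rw [hφd.deriv]
      have h1 : 1 / (2 * c) < 1 / c := by
        apply one_div_lt_one_div_of_lt hc0; linarith
      linarith
    have hanti : StrictAntiOn φ (Set.Icc m r0) :=
      strictAntiOn_of_deriv_neg (convex_Icc m r0) hφcont hφderiv
    have hcontr : φ r0 < φ m :=
      hanti (Set.left_mem_Icc.mpr (le_of_lt hmr0))
        (Set.right_mem_Icc.mpr (le_of_lt hmr0)) hmr0
    have h2c : (0:ℝ) < 2 * c := by linarith
    have hcontr' : g r0 + r0 / (2 * c) < g m + m / (2 * c) := hcontr
    have h4 : r0 / (2 * c) < m / (2 * c) := by linarith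
    have h5 : r0 < m := by
      have h6 := mul_lt_mul_of_pos_right h4 h2c
      rwa [div_mul_cancel₀ _ (ne_of_gt h2c), div_mul_cancel₀ _ (ne_of_gt h2c)] at h6
    linarith
  constructor
  · intro r hr
    have := key r hr
    rw [hg_eq r hr] at this
    linarith
  · intro r hr
    rcases eq_or_lt_of_le hr with h | h
    · rw [← h, hf0]; norm_num
    · set ψ : ℝ → ℝ := fun t => t ^ 2 / (2 * c) - f t with hψdef
      have hψcont : ContinuousOn ψ (Set.Icc 0 r) := by
        apply ContinuousOn.sub
        · exact ((continuous_pow 2).div_const (2 * c)).continuousOn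
        · exact hcont.mono (fun t ht => ht.1)
      have hψderiv : ∀ t ∈ interior (Set.Icc 0 r), 0 < deriv ψ t := by
        intro t ht
        rw [interior_Icc] at ht
        have ht0 : 0 < t := ht.1
        have hψd : HasDerivAt ψ (2 * t ^ 1 / (2 * c) - deriv f t) t := by
          have h1 : HasDerivAt (fun x : ℝ => x ^ 2) ((2:ℕ) * t ^ 1) t := by
            simpa using hasDerivAt_pow 2 t
          exact (h1.div_const (2 * c)).sub (hf_diff t ht0)
        rw [hψd.deriv]
        have hlt : deriv f t < t / c := by
          have := key t ht0
          rw [hg_eq t ht0] at this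
          linarith
        have heq : 2 * t ^ 1 / (2 * c) = t / c := by
          field_simp
        rw [heq]
        linarith
      have hmono : StrictMonoOn ψ (Set.Icc 0 r) :=
        strictMonoOn_of_deriv_pos (convex_Icc 0 r) hψcont hψderiv
      have := hmono (Set.left_mem_Icc.mpr (le_of_lt h))
        (Set.right_mem_Icc.mpr (le_of_lt h)) h
      have h6 : (0:ℝ) ^ 2 / (2 * c) - f 0 < r ^ 2 / (2 * c) - f r := this
      rw [hf0] at h6
      norm_num at h6
      linarith
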